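/- Let f : X → Y be a continuous map from a Čech-complete space X to a functionally Hausdorff space Y. If the cardinality of the image f(X) is strictly greater than max{ψ(Y), l(X)}, then there exists a compact subset K ⊆ X whose image f(K) is not scattered. -/

import Mathlib

open Cardinal Set Topology

universe u

def FunctionallyHausdorff (X : Type u) [TopologicalSpace X] : Prop :=
  ∀ x y : X, x ≠ y → ∃ f : X → unitInterval, Continuous f ∧ f x = 0 ∧ f y = 1

def IsCechComplete (X : Type u) [TopologicalSpace X] : Prop :=
  ∃ (K : Type u) (_ : TopologicalSpace K) (e : X → K),
    CompactSpace K ∧ T2Space K ∧ IsEmbedding e ∧ DenseRange e ∧ IsGδ (Set.range e)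

noncomputable def lindelofNumber (X : Type u) [TopologicalSpace X] : Cardinal.{u} :=
  sInf {κ : Cardinal.{u} | ℵ₀ ≤ κ ∧ ∀ U : Set (Set X), (∀ u ∈ U, IsOpen u) → ⋃₀ U = Set.univ →
    ∃ V ⊆ U, #↥V ≤ κ ∧ ⋃₀ V = Set.univ}

noncomputable def pseudocharacter (X : Type u) [TopologicalSpace X] : Cardinal.{u} :=
  sInf {κ : Cardinal.{u} | ℵ₀ ≤ κ ∧ ∀ x : X, ∃ 𝒰 : Set (Set X),
    #↥𝒰 ≤ κ ∧ (∀ U ∈ 𝒰, IsOpen U ∧ x ∈ U) ∧ ⋂₀ 𝒰 = ⋂₀ {U : Set X | IsOpen U ∧ x ∈ U}}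

def IsScatteredSet {X : Type u} [TopologicalSpace X] (S : Set X) : Prop :=
  ∀ T ⊆ S, T.Nonempty → ∃ x ∈ T, ∃ U : Set X, IsOpen U ∧ U ∩ T = {x}

def IsKAnalytic (X : Type u) [TopologicalSpace X] : Prop :=
  ∃ (P : Type u) (_ : TopologicalSpace P) (f : P → X),
    LindelofSpace P ∧ IsCechComplete P ∧ Continuous f ∧ Function.Surjective f

def IsAnalyticSpace (X : Type u) [TopologicalSpace X] : Prop :=
  ∃ (P : Type u) (_ : TopologicalSpace P), PolishSpace P ∧
    ∃ f : P → X, Continuous f ∧ Function.Surjective f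

noncomputable def boundingNumber : Cardinal.{0} :=
  sInf {κ : Cardinal.{0} | ∃ B : Set (ℕ → ℕ), #↥B = κ ∧
    ∀ y : ℕ → ℕ, ∃ x ∈ B, {n : ℕ | ¬ x n ≤ y n}.Infinite}

set_option linter.unusedSectionVars false

namespace Stmt0Aux

/-- unit interval helper sets -/
lemma isOpen_lt_half : IsOpen {t : unitInterval | (t : ℝ) < 1/2} :=
  isOpen_Iio.preimage continuous_subtype_val

lemma isOpen_lt_quarter : IsOpen {t : unitInterval | (t : ℝ) < 1/4} :=
  isOpen_Iio.preimage continuous_subtype_val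

lemma isOpen_gt : IsOpen {t : unitInterval | (3:ℝ)/4 < (t : ℝ)} :=
  isOpen_Ioi.preimage continuous_subtype_val

lemma isClosed_le_quarter : IsClosed {t : unitInterval | (t : ℝ) ≤ 1/4} :=
  isClosed_Iic.preimage continuous_subtype_val

lemma isClosed_ge : IsClosed {t : unitInterval | (3:ℝ)/4 ≤ (t : ℝ)} :=
  isClosed_Ici.preimage continuous_subtype_val

variable {X Y : Type u} [TopologicalSpace X] [TopologicalSpace Y]

/-- In a functionally Hausdorff space, singletons are the intersection of all
open neighborhoods. -/
lemma funcH_sInter (hY : FunctionallyHausdorff Y) (y : Y) :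
    ⋂₀ {U : Set Y | IsOpen U ∧ y ∈ U} = {y} := by
  apply subset_antisymm
  · intro z hz
    by_contra hzy
    have hne : y ≠ z := fun h => hzy (h ▸ rfl)
    obtain ⟨φ, hφc, hφ0, hφ1⟩ := hY y z hne
    have hz' : z ∈ φ ⁻¹' {t : unitInterval | (t : ℝ) < 1/2} := by
      apply hz
      refine ⟨isOpen_lt_half.preimage hφc, ?_⟩
      show (↑(φ y) : ℝ) < 1/2
      rw [hφ0]; norm_num
    have : (↑(φ z) : ℝ) < 1/2 := hz'
    rw [hφ1] at this
    norm_num at this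
  · rintro z rfl U ⟨-, hU⟩
    exact hU

section Kappa

variable {f : X → Y} {κ : Cardinal.{u}}

/-- If every point of a closed set `B` has an open neighborhood `U` with
`#(f '' (B ∩ U)) ≤ κ`, then `#(f '' B) ≤ κ`. -/
lemma smallImage (hκ : ℵ₀ ≤ κ)
    (hLin : ∀ U : Set (Set X), (∀ u ∈ U, IsOpen u) → ⋃₀ U = Set.univ →
      ∃ V ⊆ U, #↥V ≤ κ ∧ ⋃₀ V = Set.univ)
    {B : Set X} (hB : IsClosed B)
    (h : ∀ x ∈ B, ∃ U : Set X, IsOpen U ∧ x ∈ U ∧ #↥(f '' (B ∩ U)) ≤ κ) :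
    #↥(f '' B) ≤ κ := by
  set 𝒞 : Set (Set X) := insert Bᶜ {U | IsOpen U ∧ #↥(f '' (B ∩ U)) ≤ κ} with h𝒞
  have hopen : ∀ u ∈ 𝒞, IsOpen u := by
    rintro u (rfl | hu)
    · exact hB.isOpen_compl
    · exact hu.1
  have hcover : ⋃₀ 𝒞 = Set.univ := by
    apply Set.eq_univ_of_forall
    intro x
    by_cases hx : x ∈ B
    · obtain ⟨U, hU, hxU, hUκ⟩ := h x hx
      exact ⟨U, Or.inr ⟨hU, hUκ⟩, hxU⟩
    · exact ⟨Bᶜ, Or.inl rfl, hx⟩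
  obtain ⟨V, hV𝒞, hVcard, hVcover⟩ := hLin 𝒞 hopen hcover
  have hsub : f '' B ⊆ ⋃ (U : ↥V), f '' (B ∩ ↑U) := by
    rintro y ⟨x, hx, rfl⟩
    have : x ∈ ⋃₀ V := hVcover ▸ Set.mem_univ x
    obtain ⟨U, hUV, hxU⟩ := this
    exact Set.mem_iUnion.2 ⟨⟨U, hUV⟩, ⟨x, ⟨hx, hxU⟩, rfl⟩⟩
  calc #↥(f '' B) ≤ #↥(⋃ (U : ↥V), f '' (B ∩ ↑U)) := Cardinal.mk_le_mk_of_subset hsub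
    _ ≤ Cardinal.sum (fun U : ↥V => #↥(f '' (B ∩ ↑U))) := Cardinal.mk_iUnion_le_sum_mk
    _ ≤ Cardinal.sum (fun _ : ↥V => κ) := by
        apply Cardinal.sum_le_sum
        rintro ⟨U, hUV⟩
        rcases hV𝒞 hUV with rfl | hU
        · simp
        · exact hU.2
    _ = #↥V * κ := Cardinal.sum_const' _ _
    _ ≤ κ * κ := mul_le_mul' hVcard le_rfl
    _ = κ := Cardinal.mul_eq_self hκ

/-- In a closed set with `κ < #(f '' A)`, there are two points with distinct
`f`-images, each of which has all its neighborhoods `f`-large inside `A`. -/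
lemma existsTwo (hY : FunctionallyHausdorff Y) (hf : Continuous f) (hκ : ℵ₀ ≤ κ)
    (hLin : ∀ U : Set (Set X), (∀ u ∈ U, IsOpen u) → ⋃₀ U = Set.univ →
      ∃ V ⊆ U, #↥V ≤ κ ∧ ⋃₀ V = Set.univ)
    (hPsi : ∀ y : Y, ∃ 𝒰 : Set (Set Y), #↥𝒰 ≤ κ ∧ (∀ U ∈ 𝒰, IsOpen U ∧ y ∈ U) ∧
      ⋂₀ 𝒰 = ⋂₀ {U : Set Y | IsOpen U ∧ y ∈ U})
    {A : Set X} (hA : IsClosed A) (hbig : κ < #↥(f '' A)) :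
    ∃ x₀ ∈ A, ∃ x₁ ∈ A, f x₀ ≠ f x₁ ∧
      (∀ U : Set X, IsOpen U → x₀ ∈ U → κ < #↥(f '' (A ∩ U))) ∧
      (∀ U : Set X, IsOpen U → x₁ ∈ U → κ < #↥(f '' (A ∩ U))) := by
  classical
  set A' : Set X := {x | x ∈ A ∧ ∀ U : Set X, IsOpen U → x ∈ U → κ < #↥(f '' (A ∩ U))} with hA'
  have hnotmem : ∀ x ∈ A, x ∉ A' → ∃ U : Set X, IsOpen U ∧ x ∈ U ∧ #↥(f '' (A ∩ U)) ≤ κ := by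
    intro x hxA hx'
    have hx2 : ¬ ∀ U : Set X, IsOpen U → x ∈ U → κ < #↥(f '' (A ∩ U)) :=
      fun hall => hx' ⟨hxA, hall⟩
    push_neg at hx2
    exact hx2
  -- A' is nonempty
  have hA'ne : A'.Nonempty := by
    by_contra hne
    rw [Set.not_nonempty_iff_eq_empty] at hne
    have : #↥(f '' A) ≤ κ := by
      apply smallImage hκ hLin hA
      intro x hx
      exact hnotmem x hx (hne ▸ Set.notMem_empty x)
    exact absurd this (not_le.2 hbig)
  obtain ⟨a, ha⟩ := hA'ne
  have key : ∃ x₀ ∈ A', ∃ x₁ ∈ A', f x₀ ≠ f x₁ := by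
    by_contra hcon
    push_neg at hcon
    have hsame : ∀ x ∈ A', f x = f a := fun x hx => hcon x hx a ha
    obtain ⟨𝒰, h𝒰card, h𝒰op, h𝒰int⟩ := hPsi (f a)
    have hsingle : ⋂₀ 𝒰 = {f a} := h𝒰int.trans (funcH_sInter hY (f a))
    -- each A \ f⁻¹ V has small image
    have hsmall : ∀ V ∈ 𝒰, #↥(f '' (A \ f ⁻¹' V)) ≤ κ := by
      intro V hV
      apply smallImage hκ hLin (hA.sdiff ((h𝒰op V hV).1.preimage hf))
      intro x hx
      have hxA : x ∈ A := hx.1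
      have hxA' : x ∉ A' := by
        intro hxA'
        exact hx.2 (by
          have hfx : f x = f a := hsame x hxA'
          show f x ∈ V
          rw [hfx]
          exact (h𝒰op V hV).2)
      obtain ⟨U, hU, hxU, hUκ⟩ := hnotmem x hxA hxA'
      refine ⟨U, hU, hxU, le_trans (Cardinal.mk_le_mk_of_subset ?_) hUκ⟩
      exact Set.image_mono (f := f) (Set.inter_subset_inter_left _ Set.diff_subset)
    -- conclude the image of A is small
    have hsub : f '' A ⊆ {f a} ∪ ⋃ (V : ↥𝒰), f '' (A \ f ⁻¹' ↑V) := by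
      rintro y ⟨x, hx, rfl⟩
      by_cases hfy : f x = f a
      · exact Or.inl (by simp [hfy])
      · have : f x ∉ ⋂₀ 𝒰 := by rw [hsingle]; simpa using hfy
        obtain ⟨V, hV𝒰, hfV⟩ := by simpa [Set.mem_sInter] using this
        exact Or.inr (Set.mem_iUnion.2 ⟨⟨V, hV𝒰⟩, ⟨x, ⟨hx, hfV⟩, rfl⟩⟩)
    have : #↥(f '' A) ≤ κ := by
      calc #↥(f '' A) ≤ #↥({f a} ∪ ⋃ (V : ↥𝒰), f '' (A \ f ⁻¹' ↑V) : Set Y) :=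
            Cardinal.mk_le_mk_of_subset hsub
        _ ≤ #↥({f a} : Set Y) + #↥(⋃ (V : ↥𝒰), f '' (A \ f ⁻¹' ↑V)) := Cardinal.mk_union_le _ _
        _ ≤ 1 + #↥𝒰 * κ := by
            gcongr
            · rw [Cardinal.mk_singleton]
            · calc #↥(⋃ (V : ↥𝒰), f '' (A \ f ⁻¹' ↑V))
                  ≤ Cardinal.sum (fun V : ↥𝒰 => #↥(f '' (A \ f ⁻¹' ↑V))) :=
                    Cardinal.mk_iUnion_le_sum_mk
                _ ≤ Cardinal.sum (fun _ : ↥𝒰 => κ) :=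
                    Cardinal.sum_le_sum _ _ (fun V => hsmall V V.2)
                _ = #↥𝒰 * κ := Cardinal.sum_const' _ _
        _ ≤ κ + κ * κ := by
            gcongr
            · exact le_trans Cardinal.one_le_aleph0 hκ
        _ = κ := by rw [Cardinal.mul_eq_self hκ, Cardinal.add_eq_self hκ]
    exact absurd this (not_le.2 hbig)
  obtain ⟨x₀, hx₀, x₁, hx₁, hne⟩ := key
  exact ⟨x₀, hx₀.1, x₁, hx₁.1, hne, hx₀.2, hx₁.2⟩

end Kappa

section Scheme

variable {cX : Type u} [TopologicalSpace cX] [CompactSpace cX] [T2Space cX]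
variable {e : X → cX} {f : X → Y} {κ : Cardinal.{u}}

/-- One splitting step of the Cantor scheme construction. -/
lemma step (hY : FunctionallyHausdorff Y) (he : Continuous e) (heinj : Function.Injective e)
    (hf : Continuous f) (hκ : ℵ₀ ≤ κ)
    (hLin : ∀ U : Set (Set X), (∀ u ∈ U, IsOpen u) → ⋃₀ U = Set.univ →
      ∃ V ⊆ U, #↥V ≤ κ ∧ ⋃₀ V = Set.univ)
    (hPsi : ∀ y : Y, ∃ 𝒰 : Set (Set Y), #↥𝒰 ≤ κ ∧ (∀ U ∈ 𝒰, IsOpen U ∧ y ∈ U) ∧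
      ⋂₀ 𝒰 = ⋂₀ {U : Set Y | IsOpen U ∧ y ∈ U})
    {A : Set X} (hA : IsClosed A) (hbig : κ < #↥(f '' A))
    {G : Set cX} (hG : IsOpen G) (hrng : Set.range e ⊆ G) :
    ∃ A₀ A₁ : Set X,
      (IsClosed A₀ ∧ A₀ ⊆ A ∧ κ < #↥(f '' A₀) ∧ closure (e '' A₀) ⊆ G) ∧
      (IsClosed A₁ ∧ A₁ ⊆ A ∧ κ < #↥(f '' A₁) ∧ closure (e '' A₁) ⊆ G) ∧
      f '' A₀ ∩ f '' A₁ = ∅ := by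
  obtain ⟨x₀, hx₀A, x₁, hx₁A, hne, hbig₀, hbig₁⟩ := existsTwo hY hf hκ hLin hPsi hA hbig
  obtain ⟨φ, hφc, hφ0, hφ1⟩ := hY (f x₀) (f x₁) hne
  obtain ⟨t₀, ht₀n, ht₀c, ht₀G⟩ := exists_mem_nhds_isClosed_subset (hG.mem_nhds (hrng ⟨x₀, rfl⟩))
  obtain ⟨t₁, ht₁n, ht₁c, ht₁G⟩ := exists_mem_nhds_isClosed_subset (hG.mem_nhds (hrng ⟨x₁, rfl⟩))
  refine ⟨A ∩ e ⁻¹' t₀ ∩ (fun x => φ (f x)) ⁻¹' {t : unitInterval | (t : ℝ) ≤ 1/4},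
          A ∩ e ⁻¹' t₁ ∩ (fun x => φ (f x)) ⁻¹' {t : unitInterval | (3:ℝ)/4 ≤ (t : ℝ)},
          ⟨?_, ?_, ?_, ?_⟩, ⟨?_, ?_, ?_, ?_⟩, ?_⟩
  · exact ((hA.inter (ht₀c.preimage he)).inter (isClosed_le_quarter.preimage (hφc.comp hf)))
  · exact fun x hx => hx.1.1
  · refine lt_of_lt_of_le (hbig₀ (e ⁻¹' (interior t₀) ∩
      (fun x => φ (f x)) ⁻¹' {t : unitInterval | (t : ℝ) < 1/4} : Set X)
      ((isOpen_interior.preimage he).inter (isOpen_lt_quarter.preimage (hφc.comp hf))) ?_)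
      (Cardinal.mk_le_mk_of_subset (Set.image_mono (f := f) ?_))
    · refine ⟨mem_interior_iff_mem_nhds.2 ht₀n, ?_⟩
      show (↑(φ (f x₀)) : ℝ) < 1/4
      rw [hφ0]; norm_num
    · rintro x ⟨hxA, hxi, hxq⟩
      refine ⟨⟨hxA, Set.mem_preimage.2 (interior_subset (Set.mem_preimage.1 hxi))⟩, ?_⟩
      have hxq' : (↑(φ (f x)) : ℝ) < 1/4 := hxq
      exact le_of_lt hxq'
  · refine subset_trans (closure_mono ?_) (subset_trans (ht₀c.closure_subset) ht₀G)
    rintro z ⟨x, hx, rfl⟩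
    exact hx.1.2
  · exact ((hA.inter (ht₁c.preimage he)).inter (isClosed_ge.preimage (hφc.comp hf)))
  · exact fun x hx => hx.1.1
  · refine lt_of_lt_of_le (hbig₁ (e ⁻¹' (interior t₁) ∩
      (fun x => φ (f x)) ⁻¹' {t : unitInterval | (3:ℝ)/4 < (t : ℝ)} : Set X)
      ((isOpen_interior.preimage he).inter (isOpen_gt.preimage (hφc.comp hf))) ?_)
      (Cardinal.mk_le_mk_of_subset (Set.image_mono (f := f) ?_))
    · refine ⟨mem_interior_iff_mem_nhds.2 ht₁n, ?_⟩
      show (3:ℝ)/4 < (↑(φ (f x₁)) : ℝ)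
      rw [hφ1]; norm_num
    · rintro x ⟨hxA, hxi, hxq⟩
      refine ⟨⟨hxA, Set.mem_preimage.2 (interior_subset (Set.mem_preimage.1 hxi))⟩, ?_⟩
      have hxq' : (3:ℝ)/4 < (↑(φ (f x)) : ℝ) := hxq
      exact le_of_lt hxq'
  · refine subset_trans (closure_mono ?_) (subset_trans (ht₁c.closure_subset) ht₁G)
    rintro z ⟨x, hx, rfl⟩
    exact hx.1.2
  · ext y
    simp only [Set.mem_inter_iff, Set.mem_empty_iff_false, iff_false, not_and]
    rintro ⟨x, hx, rfl⟩ ⟨x', hx', hfx⟩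
    have h1 : (↑(φ (f x)) : ℝ) ≤ 1/4 := hx.2
    have h2 : (3:ℝ)/4 ≤ (↑(φ (f x')) : ℝ) := hx'.2
    rw [hfx] at h2
    linarith

/-- The Cantor scheme: a family of closed, `f`-large sets indexed by `List Bool`
(children are obtained by prepending a bit). -/
noncomputable def scheme (hY : FunctionallyHausdorff Y) (he : Continuous e)
    (heinj : Function.Injective e) (hf : Continuous f) (hκ : ℵ₀ ≤ κ)
    (hLin : ∀ U : Set (Set X), (∀ u ∈ U, IsOpen u) → ⋃₀ U = Set.univ →
      ∃ V ⊆ U, #↥V ≤ κ ∧ ⋃₀ V = Set.univ)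
    (hPsi : ∀ y : Y, ∃ 𝒰 : Set (Set Y), #↥𝒰 ≤ κ ∧ (∀ U ∈ 𝒰, IsOpen U ∧ y ∈ U) ∧
      ⋂₀ 𝒰 = ⋂₀ {U : Set Y | IsOpen U ∧ y ∈ U})
    (G : ℕ → Set cX) (hGo : ∀ n, IsOpen (G n)) (hGr : ∀ n, Set.range e ⊆ G n)
    (hbig : κ < #↥(Set.range f)) :
    List Bool → {A : Set X // IsClosed A ∧ κ < #↥(f '' A)}
  | [] => ⟨Set.univ, isClosed_univ, by rwa [Set.image_univ]⟩
  | i :: s =>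
    have h := step hY he heinj hf hκ hLin hPsi
      (scheme hY he heinj hf hκ hLin hPsi G hGo hGr hbig s).2.1
      (scheme hY he heinj hf hκ hLin hPsi G hGo hGr hbig s).2.2 (hGo s.length) (hGr s.length)
    match i with
    | false => ⟨h.choose, h.choose_spec.choose_spec.1.1, h.choose_spec.choose_spec.1.2.2.1⟩
    | true => ⟨h.choose_spec.choose, h.choose_spec.choose_spec.2.1.1,
        h.choose_spec.choose_spec.2.1.2.2.1⟩

variable (hY : FunctionallyHausdorff Y) (he : Continuous e)
    (heinj : Function.Injective e) (hf : Continuous f) (hκ : ℵ₀ ≤ κ)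
    (hLin : ∀ U : Set (Set X), (∀ u ∈ U, IsOpen u) → ⋃₀ U = Set.univ →
      ∃ V ⊆ U, #↥V ≤ κ ∧ ⋃₀ V = Set.univ)
    (hPsi : ∀ y : Y, ∃ 𝒰 : Set (Set Y), #↥𝒰 ≤ κ ∧ (∀ U ∈ 𝒰, IsOpen U ∧ y ∈ U) ∧
      ⋂₀ 𝒰 = ⋂₀ {U : Set Y | IsOpen U ∧ y ∈ U})
    (G : ℕ → Set cX) (hGo : ∀ n, IsOpen (G n)) (hGr : ∀ n, Set.range e ⊆ G n)
    (hbig : κ < #↥(Set.range f))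

lemma scheme_cons (i : Bool) (s : List Bool) :
    (scheme hY he heinj hf hκ hLin hPsi G hGo hGr hbig (i :: s)).1 ⊆
      (scheme hY he heinj hf hκ hLin hPsi G hGo hGr hbig s).1 ∧
    closure (e '' (scheme hY he heinj hf hκ hLin hPsi G hGo hGr hbig (i :: s)).1) ⊆
      G s.length := by
  have h := step hY he heinj hf hκ hLin hPsi
    (scheme hY he heinj hf hκ hLin hPsi G hGo hGr hbig s).2.1
    (scheme hY he heinj hf hκ hLin hPsi G hGo hGr hbig s).2.2 (hGo s.length) (hGr s.length)
  cases i
  · exact ⟨h.choose_spec.choose_spec.1.2.1, h.choose_spec.choose_spec.1.2.2.2⟩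
  · exact ⟨h.choose_spec.choose_spec.2.1.2.1, h.choose_spec.choose_spec.2.1.2.2.2⟩

lemma scheme_sib (s : List Bool) :
    f '' (scheme hY he heinj hf hκ hLin hPsi G hGo hGr hbig (false :: s)).1 ∩
    f '' (scheme hY he heinj hf hκ hLin hPsi G hGo hGr hbig (true :: s)).1 = ∅ := by
  have h := step hY he heinj hf hκ hLin hPsi
    (scheme hY he heinj hf hκ hLin hPsi G hGo hGr hbig s).2.1
    (scheme hY he heinj hf hκ hLin hPsi G hGo hGr hbig s).2.2 (hGo s.length) (hGr s.length)
  exact h.choose_spec.choose_spec.2.2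

end Scheme

/-- Reversed prefixes of a branch. -/
def node (b : ℕ → Bool) : ℕ → List Bool
  | 0 => []
  | n + 1 => b n :: node b n

@[simp] lemma node_length (b : ℕ → Bool) (n : ℕ) : (node b n).length = n := by
  induction n with
  | zero => rfl
  | succ n ih => simp [node, ih]

lemma node_congr {b b' : ℕ → Bool} {n : ℕ} (h : ∀ m < n, b m = b' m) :
    node b n = node b' n := by
  induction n with
  | zero => rfl
  | succ n ih =>
    simp only [node]
    rw [h n (Nat.lt_succ_self n), ih (fun m hm => h m (Nat.lt_succ_of_lt hm))]

end Stmt0Aux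

theorem stmt0 {X Y : Type u} [TopologicalSpace X] [TopologicalSpace Y]
    (hX : IsCechComplete X) (hY : FunctionallyHausdorff Y)
    (f : X → Y) (hf : Continuous f)
    (hcard : max (pseudocharacter Y) (lindelofNumber X) < #↥(Set.range f)) :
    ∃ K : Set X, IsCompact K ∧ ¬ IsScatteredSet (f '' K) := by
  classical
  obtain ⟨cX, tcX, e, hcomp, ht2, hemb, -, hGδ⟩ := hX
  letI := tcX; haveI := hcomp; haveI := ht2
  set κ := max (pseudocharacter Y) (lindelofNumber X) with hκdef
  -- properties of the Lindelöf number
  have hLset : Set.Nonempty {κ : Cardinal.{u} | ℵ₀ ≤ κ ∧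
      ∀ U : Set (Set X), (∀ u ∈ U, IsOpen u) → ⋃₀ U = Set.univ →
      ∃ V ⊆ U, #↥V ≤ κ ∧ ⋃₀ V = Set.univ} :=
    ⟨max ℵ₀ #(Set X), le_max_left _ _, fun U hUo hUc =>
      ⟨U, subset_rfl, le_trans (Cardinal.mk_set_le U) (le_max_right _ _), hUc⟩⟩
  have hLmem : ℵ₀ ≤ lindelofNumber X ∧
      ∀ U : Set (Set X), (∀ u ∈ U, IsOpen u) → ⋃₀ U = Set.univ →
      ∃ V ⊆ U, #↥V ≤ lindelofNumber X ∧ ⋃₀ V = Set.univ := csInf_mem hLset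
  -- properties of the pseudocharacter
  have hPset : Set.Nonempty {κ : Cardinal.{u} | ℵ₀ ≤ κ ∧ ∀ y : Y, ∃ 𝒰 : Set (Set Y),
      #↥𝒰 ≤ κ ∧ (∀ U ∈ 𝒰, IsOpen U ∧ y ∈ U) ∧
      ⋂₀ 𝒰 = ⋂₀ {U : Set Y | IsOpen U ∧ y ∈ U}} :=
    ⟨max ℵ₀ #(Set Y), le_max_left _ _, fun y =>
      ⟨{U : Set Y | IsOpen U ∧ y ∈ U},
        le_trans (Cardinal.mk_set_le _) (le_max_right _ _), fun U hU => hU, rfl⟩⟩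
  have hPmem : ℵ₀ ≤ pseudocharacter Y ∧ ∀ y : Y, ∃ 𝒰 : Set (Set Y),
      #↥𝒰 ≤ pseudocharacter Y ∧ (∀ U ∈ 𝒰, IsOpen U ∧ y ∈ U) ∧
      ⋂₀ 𝒰 = ⋂₀ {U : Set Y | IsOpen U ∧ y ∈ U} := csInf_mem hPset
  have hκ : ℵ₀ ≤ κ := hPmem.1.trans (le_max_left _ _)
  have hLin : ∀ U : Set (Set X), (∀ u ∈ U, IsOpen u) → ⋃₀ U = Set.univ →
      ∃ V ⊆ U, #↥V ≤ κ ∧ ⋃₀ V = Set.univ := by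
    intro U hUo hUc
    obtain ⟨V, h1, h2, h3⟩ := hLmem.2 U hUo hUc
    exact ⟨V, h1, h2.trans (le_max_right _ _), h3⟩
  have hPsi : ∀ y : Y, ∃ 𝒰 : Set (Set Y), #↥𝒰 ≤ κ ∧ (∀ U ∈ 𝒰, IsOpen U ∧ y ∈ U) ∧
      ⋂₀ 𝒰 = ⋂₀ {U : Set Y | IsOpen U ∧ y ∈ U} := by
    intro y
    obtain ⟨𝒰, h1, h2, h3⟩ := hPmem.2 y
    exact ⟨𝒰, h1.trans (le_max_left _ _), h2, h3⟩
  -- the Gδ structure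
  obtain ⟨G, hGo, hGeq⟩ := hGδ.eq_iInter_nat
  have hGr : ∀ n, Set.range e ⊆ G n := by
    intro n x hx
    rw [hGeq] at hx
    exact Set.mem_iInter.1 hx n
  -- the scheme
  set A : List Bool → Set X := fun s =>
    (Stmt0Aux.scheme hY hemb.continuous hemb.injective hf hκ hLin hPsi G hGo hGr hcard s).1
    with hAdef
  have hAclosed : ∀ s, IsClosed (A s) := fun s =>
    (Stmt0Aux.scheme hY hemb.continuous hemb.injective hf hκ hLin hPsi G hGo hGr hcard s).2.1
  have hAbig : ∀ s, κ < #↥(f '' A s) := fun s =>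
    (Stmt0Aux.scheme hY hemb.continuous hemb.injective hf hκ hLin hPsi G hGo hGr hcard s).2.2
  have hAcons : ∀ (i : Bool) (s : List Bool), A (i :: s) ⊆ A s ∧
      closure (e '' A (i :: s)) ⊆ G s.length := fun i s =>
    Stmt0Aux.scheme_cons hY hemb.continuous hemb.injective hf hκ hLin hPsi G hGo hGr hcard i s
  have hAsib : ∀ s : List Bool, f '' A (false :: s) ∩ f '' A (true :: s) = ∅ := fun s =>
    Stmt0Aux.scheme_sib hY hemb.continuous hemb.injective hf hκ hLin hPsi G hGo hGr hcard s
  have hAnil : A [] = Set.univ := rfl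
  have hAne : ∀ s, (A s).Nonempty := by
    intro s
    rcases Set.eq_empty_or_nonempty (A s) with h | h
    · exfalso
      have := hAbig s
      rw [h, Set.image_empty, Cardinal.mk_emptyCollection] at this
      exact (Cardinal.zero_le κ).not_gt this
    · exact h
  -- the compact set
  set L : Set cX := ⋂ (n : ℕ), ⋃ s ∈ {l : List Bool | l.length = n}, closure (e '' A s)
    with hLdef
  have hLclosed : IsClosed L :=
    isClosed_iInter fun n =>
      (List.finite_length_eq Bool n).isClosed_biUnion (fun s _ => isClosed_closure)
  have hLrange : L ⊆ Set.range e := by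
    intro z hz
    rw [hGeq]
    refine Set.mem_iInter.2 fun n => ?_
    have hz' := Set.mem_iInter.1 hz (n + 1)
    obtain ⟨s, hslen, hzs⟩ := Set.mem_iUnion₂.1 hz'
    match s, hslen with
    | i :: t, hslen =>
      have htlen : t.length = n := by simpa using hslen
      exact htlen ▸ (hAcons i t).2 hzs
  set K : Set X := e ⁻¹' L with hKdef
  have hKL : e '' K = L := by
    rw [hKdef, Set.image_preimage_eq_inter_range]
    exact Set.inter_eq_left.2 hLrange
  have hKcomp : IsCompact K := by
    rw [hemb.isCompact_iff, hKL]
    exact hLclosed.isCompact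
  have hKclosed : IsClosed K := hLclosed.preimage hemb.continuous
  -- fullness of K
  have hKfull : ∀ (b : ℕ → Bool) (n : ℕ), (K ∩ A (Stmt0Aux.node b n)).Nonempty := by
    intro b n
    have hnested : ∀ m, closure (e '' A (Stmt0Aux.node b (m + 1))) ⊆
        closure (e '' A (Stmt0Aux.node b m)) := fun m =>
      closure_mono (Set.image_mono (f := e) (hAcons (b m) (Stmt0Aux.node b m)).1)
    have hcne : ∀ m, (closure (e '' A (Stmt0Aux.node b m))).Nonempty := fun m =>
      ((hAne _).image e).closure
    obtain ⟨z, hz⟩ := IsCompact.nonempty_iInter_of_sequence_nonempty_isCompact_isClosed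
      (fun m => closure (e '' A (Stmt0Aux.node b m))) hnested hcne
      isClosed_closure.isCompact (fun m => isClosed_closure)
    have hzG : z ∈ Set.range e := by
      rw [hGeq]
      refine Set.mem_iInter.2 fun m => ?_
      have := Set.mem_iInter.1 hz (m + 1)
      have h2 := (hAcons (b m) (Stmt0Aux.node b m)).2 (by
        simpa [Stmt0Aux.node] using this)
      rwa [Stmt0Aux.node_length] at h2
    obtain ⟨x, rfl⟩ := hzG
    have hxA : ∀ m, x ∈ A (Stmt0Aux.node b m) := by
      intro m
      have h1 : e x ∈ closure (e '' A (Stmt0Aux.node b m)) := Set.mem_iInter.1 hz m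
      have h2 : x ∈ closure (A (Stmt0Aux.node b m)) := by
        rw [hemb.closure_eq_preimage_closure_image]
        exact h1
      rwa [(hAclosed _).closure_eq] at h2
    refine ⟨x, ?_, hxA n⟩
    refine Set.mem_iInter.2 fun m => ?_
    exact Set.mem_iUnion₂.2 ⟨Stmt0Aux.node b m, Stmt0Aux.node_length b m,
      Set.mem_iInter.1 hz m⟩
  -- Zorn argument
  refine ⟨K, hKcomp, ?_⟩
  intro hscat
  set 𝒜 : Set (Set X) := {M | M ⊆ K ∧ IsClosed M ∧
      ∀ (b : ℕ → Bool) (n : ℕ), (M ∩ A (Stmt0Aux.node b n)).Nonempty} with h𝒜def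
  have hK𝒜 : K ∈ 𝒜 := ⟨subset_rfl, hKclosed, hKfull⟩
  have hchain : ∀ c ⊆ 𝒜, IsChain (· ⊆ ·) c → c.Nonempty →
      ∃ lb ∈ 𝒜, ∀ s ∈ c, lb ⊆ s := by
    intro c hc𝒜 hch hcne
    haveI : Nonempty ↥c := hcne.to_subtype
    refine ⟨⋂₀ c, ⟨?_, ?_, ?_⟩, fun M hM => Set.sInter_subset_of_mem hM⟩
    · obtain ⟨M₀, hM₀⟩ := hcne
      exact (Set.sInter_subset_of_mem hM₀).trans (hc𝒜 hM₀).1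
    · exact isClosed_sInter fun M hM => (hc𝒜 hM).2.1
    · intro b n
      have hdir : Directed (· ⊇ ·)
          (fun M : ↥c => (M : Set X) ∩ A (Stmt0Aux.node b n)) := by
        rintro ⟨M₁, hM₁⟩ ⟨M₂, hM₂⟩
        rcases hch.total hM₁ hM₂ with h | h
        · exact ⟨⟨M₁, hM₁⟩, subset_rfl,
            Set.inter_subset_inter_left _ h⟩
        · exact ⟨⟨M₂, hM₂⟩, Set.inter_subset_inter_left _ h, subset_rfl⟩
      have hint := IsCompact.nonempty_iInter_of_directed_nonempty_isCompact_isClosed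
        (fun M : ↥c => (M : Set X) ∩ A (Stmt0Aux.node b n)) hdir
        (fun M => (hc𝒜 M.2).2.2 b n)
        (fun M => hKcomp.of_isClosed_subset ((hc𝒜 M.2).2.1.inter (hAclosed _))
          (Set.inter_subset_left.trans (hc𝒜 M.2).1))
        (fun M => (hc𝒜 M.2).2.1.inter (hAclosed _))
      have heq : (⋂ M : ↥c, ((M : Set X) ∩ A (Stmt0Aux.node b n))) =
          ⋂₀ c ∩ A (Stmt0Aux.node b n) := by
        ext z
        constructor
        · intro h
          refine ⟨Set.mem_sInter.2 fun M hM => (Set.mem_iInter.1 h ⟨M, hM⟩).1,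
            (Set.mem_iInter.1 h (Classical.arbitrary _)).2⟩
        · rintro ⟨h1, h2⟩
          exact Set.mem_iInter.2 fun M => ⟨Set.mem_sInter.1 h1 M M.2, h2⟩
      rwa [heq] at hint
  obtain ⟨M, hMK, hMmin⟩ := zorn_superset_nonempty 𝒜 hchain K hK𝒜
  have hM𝒜 : M ∈ 𝒜 := hMmin.1
  -- the image of M is nonempty
  have hMne : (f '' M).Nonempty := by
    obtain ⟨x, hx⟩ := hM𝒜.2.2 (fun _ => false) 0
    exact ⟨f x, x, hx.1, rfl⟩
  obtain ⟨y, hyM, U, hUopen, hUM⟩ := hscat (f '' M) (Set.image_mono (f := f) hM𝒜.1) hMne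
  have hyU : y ∈ U := by
    have : y ∈ U ∩ f '' M := hUM ▸ rfl
    exact this.1
  -- remove the isolating neighborhood
  have hM'notfull : ¬ ∀ (b : ℕ → Bool) (n : ℕ),
      ((M \ f ⁻¹' U) ∩ A (Stmt0Aux.node b n)).Nonempty := by
    intro hfull
    have hM'𝒜 : M \ f ⁻¹' U ∈ 𝒜 :=
      ⟨Set.diff_subset.trans hM𝒜.1, hM𝒜.2.1.sdiff (hUopen.preimage hf), hfull⟩
    have hMM' : M ⊆ M \ f ⁻¹' U := hMmin.2 hM'𝒜 Set.diff_subset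
    obtain ⟨x, hxM, rfl⟩ := hyM
    exact (hMM' hxM).2 hyU
  push_neg at hM'notfull
  obtain ⟨b, n, hempty⟩ := hM'notfull
  set s := Stmt0Aux.node b n with hsdef
  have himg : ∀ x ∈ M ∩ A s, f x = y := by
    rintro x ⟨hxM, hxA⟩
    have hxU : x ∈ f ⁻¹' U := by
      by_contra hxU
      have : x ∈ (M \ f ⁻¹' U) ∩ A s := ⟨⟨hxM, hxU⟩, hxA⟩
      rw [hempty] at this
      exact this
    have : f x ∈ U ∩ f '' M := ⟨hxU, x, hxM, rfl⟩
    rw [hUM] at this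
    exact this
  -- both children of s are hit by M
  have hchild : ∀ i : Bool, y ∈ f '' A (i :: s) := by
    intro i
    set b' : ℕ → Bool := fun m => if m = n then i else b m with hb'def
    have hb'node : Stmt0Aux.node b' n = s := by
      rw [hsdef]
      exact Stmt0Aux.node_congr (fun m hm => by simp [hb'def, Nat.ne_of_lt hm])
    have hb'succ : Stmt0Aux.node b' (n + 1) = i :: s := by
      show b' n :: Stmt0Aux.node b' n = i :: s
      rw [hb'node, hb'def]
      simp
    obtain ⟨x, hx⟩ := hM𝒜.2.2 b' (n + 1)
    rw [hb'succ] at hx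
    have hfx : f x = y := himg x ⟨hx.1, (hAcons i s).1 hx.2⟩
    exact ⟨x, hx.2, hfx⟩
  have : y ∈ f '' A (false :: s) ∩ f '' A (true :: s) := ⟨hchild false, hchild true⟩
  rw [hAsib s] at this
  exact this
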